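/- Let X and Y be real random variables on a common probability space, with Y nonnegative and integrable. Let a > 0, b > 0, δ > 0 and ε₂ ≥ 0 be reals such that Pr[X ≥ a and Y ≤ b] ≤ ε₂. Let E[Y | X] denote the conditional expectation of Y given the σ-algebra generated by X. Then Pr[ X ≥ a and E[Y | X] ≤ b − δ ] ≤ b·ε₂/δ. -/

import Mathlib

open MeasureTheory

theorem condexp_small_aux {Ω : Type*} {m m0 : MeasurableSpace Ω} (hm : m ≤ m0)
    (μ : Measure Ω) [IsProbabilityMeasure μ]
    (X Y : Ω → ℝ) (hXm : Measurable[m] X)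
    (hYsm : StronglyMeasurable Y) (hYnn : 0 ≤ᵐ[μ] Y) (hYint : Integrable Y μ)
    (a b δ ε₂ : ℝ) (hb : 0 < b) (hδ : 0 < δ) (hε₂ : 0 ≤ ε₂)
    (hbound : (μ {ω | a ≤ X ω ∧ Y ω ≤ b}).toReal ≤ ε₂) :
    (μ {ω | a ≤ X ω ∧ (μ[Y | m]) ω ≤ b - δ}).toReal ≤ b * ε₂ / δ := by
  set Z : Ω → ℝ := μ[Y | m] with hZdef
  set A : Set Ω := {ω | a ≤ X ω ∧ Z ω ≤ b - δ} with hAdef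
  have hZsm : StronglyMeasurable[m] Z := stronglyMeasurable_condExp
  have hA_m : MeasurableSet[m] A := by
    have h1 : MeasurableSet[m] {ω | a ≤ X ω} := hXm measurableSet_Ici
    have h2 : MeasurableSet[m] {ω | Z ω ≤ b - δ} := hZsm.measurable measurableSet_Iic
    exact h1.inter h2
  have hA : MeasurableSet A := hm _ hA_m
  have hYb' : MeasurableSet {ω | b < Y ω} := hYsm.measurable measurableSet_Ioi
  set p : ℝ := (μ A).toReal with hp
  set q : ℝ := (μ (A ∩ {ω | Y ω ≤ b})).toReal with hq
  set r : ℝ := (μ (A ∩ {ω | b < Y ω})).toReal with hr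
  have hfin : ∀ s : Set Ω, μ s ≠ ⊤ := fun s => measure_ne_top μ s
  have hpqr : p ≤ q + r := by
    have hsub : A ⊆ (A ∩ {ω | Y ω ≤ b}) ∪ (A ∩ {ω | b < Y ω}) := by
      intro ω hω
      rcases le_or_gt (Y ω) b with h | h
      · exact Or.inl ⟨hω, h⟩
      · exact Or.inr ⟨hω, h⟩
    have h := (measure_mono (μ := μ) hsub).trans (measure_union_le (μ := μ) _ _)
    calc p ≤ ((μ (A ∩ {ω | Y ω ≤ b}) + μ (A ∩ {ω | b < Y ω}))).toReal :=
          ENNReal.toReal_mono (by finiteness) h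
      _ = q + r := ENNReal.toReal_add (hfin _) (hfin _)
  have hqε : q ≤ ε₂ := by
    refine le_trans ?_ hbound
    apply ENNReal.toReal_mono (hfin _)
    exact measure_mono fun ω hω => ⟨hω.1.1, hω.2⟩
  have hbr : b * r ≤ ∫ ω in A ∩ {ω | b < Y ω}, Y ω ∂μ := by
    have h : ∫ ω in A ∩ {ω | b < Y ω}, b ∂μ ≤ ∫ ω in A ∩ {ω | b < Y ω}, Y ω ∂μ := by
      apply setIntegral_mono_on (integrableOn_const (hfin _))
        (hYint.integrableOn) (hA.inter hYb')
      intro ω hω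
      exact hω.2.le
    simpa [setIntegral_const, mul_comm, hr, measureReal_def] using h
  have hmono : ∫ ω in A ∩ {ω | b < Y ω}, Y ω ∂μ ≤ ∫ ω in A, Y ω ∂μ :=
    setIntegral_mono_set hYint.integrableOn (ae_restrict_of_ae hYnn)
      (HasSubset.Subset.eventuallyLE Set.inter_subset_left)
  have hcond : ∫ ω in A, Y ω ∂μ = ∫ ω in A, Z ω ∂μ :=
    (setIntegral_condExp hm hYint hA_m).symm
  have hupper : ∫ ω in A, Z ω ∂μ ≤ (b - δ) * p := by
    have h : ∫ ω in A, Z ω ∂μ ≤ ∫ ω in A, (b - δ) ∂μ := by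
      apply setIntegral_mono_on integrable_condExp.integrableOn
        (integrableOn_const (hfin _)) hA
      intro ω hω
      exact hω.2
    simpa [setIntegral_const, mul_comm, hp, measureReal_def] using h
  have hr0 : 0 ≤ r := ENNReal.toReal_nonneg
  have key : b * (p - ε₂) ≤ (b - δ) * p := by
    have h1 : p - ε₂ ≤ r := by linarith
    have h2 : b * (p - ε₂) ≤ b * r := by nlinarith
    linarith [hbr.trans (hmono.trans (hcond.le.trans hupper))]
  rw [le_div_iff₀ hδ]
  nlinarith

/-- **Bounding the probability that a conditional expectation is small (Lemma 7 in
Leverrier's paper).** If `Y ≥ 0` is integrable and `Pr[X ≥ a ∧ Y ≤ b] ≤ ε₂`, then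
`Pr[X ≥ a ∧ E[Y|X] ≤ b - δ] ≤ b ε₂ / δ`. -/
theorem condexp_small_of_tail_bound
    {Ω : Type*} [MeasurableSpace Ω] (μ : Measure Ω) [IsProbabilityMeasure μ]
    (X Y : Ω → ℝ) (hXmeas : Measurable X)
    (hYnn : ∀ ω, 0 ≤ Y ω) (hYint : Integrable Y μ)
    (a b δ ε₂ : ℝ) (ha : 0 < a) (hb : 0 < b) (hδ : 0 < δ) (hε₂ : 0 ≤ ε₂)
    (hbound : (μ {ω | a ≤ X ω ∧ Y ω ≤ b}).toReal ≤ ε₂) :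
    μ {ω | a ≤ X ω ∧
        (μ[Y | MeasurableSpace.comap X (inferInstance : MeasurableSpace ℝ)]) ω ≤ b - δ}
      ≤ ENNReal.ofReal (b * ε₂ / δ) := by
  have hm : MeasurableSpace.comap X (inferInstance : MeasurableSpace ℝ) ≤ _ :=
    hXmeas.comap_le
  -- strongly measurable modification of Y
  have hYY' : Y =ᵐ[μ] hYint.1.mk Y := hYint.1.ae_eq_mk
  set Y' : Ω → ℝ := hYint.1.mk Y with hY'def
  have hY'sm : StronglyMeasurable Y' := hYint.1.stronglyMeasurable_mk
  have hY'int : Integrable Y' μ := hYint.congr hYY'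
  have hY'nn : 0 ≤ᵐ[μ] Y' := hYY'.symm.mono fun ω h => h ▸ hYnn ω
  have hXm : Measurable[MeasurableSpace.comap X (inferInstance : MeasurableSpace ℝ)] X :=
    Measurable.of_comap_le le_rfl
  have hbound' : (μ {ω | a ≤ X ω ∧ Y' ω ≤ b}).toReal ≤ ε₂ := by
    refine le_trans ?_ hbound
    apply ENNReal.toReal_mono (measure_ne_top μ _)
    apply measure_mono_ae
    filter_upwards [hYY'] with ω h hω
    exact ⟨hω.1, h ▸ hω.2⟩
  have hZZ : μ[Y | MeasurableSpace.comap X (inferInstance : MeasurableSpace ℝ)]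
      =ᵐ[μ] μ[Y' | MeasurableSpace.comap X (inferInstance : MeasurableSpace ℝ)] :=
    condExp_congr_ae hYY'
  have hgoal_eq : μ {ω | a ≤ X ω ∧
        (μ[Y | MeasurableSpace.comap X (inferInstance : MeasurableSpace ℝ)]) ω ≤ b - δ}
      = μ {ω | a ≤ X ω ∧
        (μ[Y' | MeasurableSpace.comap X (inferInstance : MeasurableSpace ℝ)]) ω ≤ b - δ} := by
    apply measure_congr
    apply Filter.eventuallyEq_set.mpr
    filter_upwards [hZZ] with ω h
    simp [h]
  rw [hgoal_eq, ENNReal.le_ofReal_iff_toReal_le (measure_ne_top μ _) (by positivity)]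
  exact condexp_small_aux hm μ X Y' hXm hY'sm hY'nn hY'int a b δ ε₂ hb hδ hε₂ hbound'
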